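/- arXiv:1809.10984 — 2 statements merged into one kernel-verified Lean document; each statement's English description precedes it below -/
import Mathlib

section
/- Let P and Q be p-subgroups of the finite group G and let g ∈ G normalize both P and Q (so that P, Q ∈ S_p(G)^⟨g⟩). If the Möbius function value μ_g(P,Q) of the poset S_p(G)^⟨g⟩ is nonzero, then Φ(Q) ≤ P ≤ Q. Equivalently: if P < Q and Φ(Q) is not contained in P, then the alternating sum Σ_c (-1)^{|c|}, taken over all chains c (including the empty chain) of the open interval {R : P < R < Q, R a p-subgroup of G, g ∈ N_G(R)}, is equal to 0. -/
open scoped Classical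

noncomputable instance subgroupFintype {G : Type*} [Group G] [Finite G] :
    Fintype (Subgroup G) :=
  haveI : Finite (Subgroup G) :=
    Finite.of_injective (fun H : Subgroup G => (H : Set G)) SetLike.coe_injective
  Fintype.ofFinite _

/-- Sum of `(-1)^|c|` over all chains `c` (including the empty chain) of the
poset of subgroups in `S`, ordered by inclusion. -/
noncomputable def chainSum {G : Type*} [Group G] [Finite G] (S : Set (Subgroup G)) : ℤ :=
  ∑ c ∈ Finset.univ.filter
      (fun c : Finset (Subgroup G) => ↑c ⊆ S ∧ IsChain (· ≤ ·) (↑c : Set (Subgroup G))),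
    (-1 : ℤ) ^ c.card

/-- Reduced Euler characteristic `χ̃(S) = Σ_c (-1)^(|c|-1)` over all chains incl. empty. -/
noncomputable def reducedEuler {G : Type*} [Group G] [Finite G] (S : Set (Subgroup G)) : ℤ :=
  - chainSum S

/-- Frattini subgroup of `Q`, regarded as a subgroup of `G`. -/
def frattiniIn {G : Type*} [Group G] (Q : Subgroup G) : Subgroup G :=
  (frattini ↥Q).map Q.subtype

/-- Möbius function of the poset `S_p(G)^⟨g⟩`. -/
noncomputable def mobiusG {G : Type*} [Group G] [Finite G] (p : ℕ) (g : G)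
    (P Q : Subgroup G) : ℤ :=
  if P = Q then 1
  else if P < Q then
    reducedEuler {R : Subgroup G | IsPGroup p R ∧ g ∈ Subgroup.normalizer (R : Set G) ∧ P < R ∧ R < Q}
  else 0

/-- If `S` is closed under join with an element `x₀ ∈ S`, then the alternating chain sum
vanishes (conical contractibility). -/
lemma chainSum_eq_zero_of_cone {G : Type*} [Group G] [Finite G] {S : Set (Subgroup G)}
    {x₀ : Subgroup G} (hx₀ : x₀ ∈ S) (hcl : ∀ y ∈ S, y ⊔ x₀ ∈ S) : chainSum S = 0 := by
  classical
  unfold chainSum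
  set pr : Subgroup G → Prop := fun y => ¬ x₀ ≤ y with hpr
  set zf : Finset (Subgroup G) → Subgroup G :=
    fun c => (c.filter pr).sup id ⊔ x₀ with hzf
  have hx₀z : ∀ c, x₀ ≤ zf c := fun c => le_sup_right
  -- the marked element is in S
  have hzS : ∀ c : Finset (Subgroup G), ↑c ⊆ S → IsChain (· ≤ ·) (↑c : Set (Subgroup G)) →
      zf c ∈ S := by
    intro c hcS hch
    rcases (c.filter pr).eq_empty_or_nonempty with he | hne
    · simp only [hzf, he, Finset.sup_empty, bot_sup_eq]
      exact hx₀
    · have hmem : (c.filter pr).sup' hne id ∈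
          ((c.filter pr : Finset (Subgroup G)) : Set (Subgroup G)) := by
        apply Finset.sup'_mem
        · intro x hx y hy
          rcases eq_or_ne x y with rfl | hxy
          · simpa using hx
          · have hx' : x ∈ (c : Set (Subgroup G)) := Finset.mem_coe.2 (Finset.filter_subset _ _ hx)
            have hy' : y ∈ (c : Set (Subgroup G)) := Finset.mem_coe.2 (Finset.filter_subset _ _ hy)
            rcases hch hx' hy' hxy with h | h
            · rw [sup_eq_right.2 h]; exact hy
            · rw [sup_eq_left.2 h]; exact hx
        · intro i hi; exact hi
      rw [Finset.mem_coe, Finset.mem_filter] at hmem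
      have hmS : (c.filter pr).sup' hne id ∈ S := hcS (Finset.mem_coe.2 hmem.1)
      have h5 := hcl _ hmS
      have hzc : zf c = (c.filter pr).sup' hne id ⊔ x₀ := by
        rw [hzf]; simp only; rw [Finset.sup'_eq_sup hne id]
      rw [hzc]
      exact h5
  -- the marked element is comparable with every element of the chain
  have hcomp : ∀ c : Finset (Subgroup G), IsChain (· ≤ ·) (↑c : Set (Subgroup G)) →
      ∀ y ∈ c, y ≤ zf c ∨ zf c ≤ y := by
    intro c hch y hy
    by_cases hxy : x₀ ≤ y
    · right
      refine sup_le (Finset.sup_le ?_) hxy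
      intro l hl
      rw [Finset.mem_filter] at hl
      have hly : l ≠ y := fun h => hl.2 (h ▸ hxy)
      rcases hch (Finset.mem_coe.2 hl.1) (Finset.mem_coe.2 hy) hly with h | h
      · exact h
      · exact absurd (le_trans hxy h) hl.2
    · left
      exact le_trans (Finset.le_sup (f := id) (Finset.mem_filter.2 ⟨hy, hxy⟩)) le_sup_left
  -- the filtered part is unchanged by adding/removing the marked element
  have hfilt : ∀ (c : Finset (Subgroup G)),
      (insert (zf c) c).filter pr = c.filter pr ∧ (c.erase (zf c)).filter pr = c.filter pr := by
    intro c
    have hz : ¬ pr (zf c) := by simp only [hpr, not_not]; exact hx₀z c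
    constructor
    · ext y
      simp only [Finset.mem_filter, Finset.mem_insert]
      constructor
      · rintro ⟨h | h, h2⟩
        · exact absurd h2 (h ▸ hz)
        · exact ⟨h, h2⟩
      · rintro ⟨h, h2⟩; exact ⟨Or.inr h, h2⟩
    · ext y
      simp only [Finset.mem_filter, Finset.mem_erase]
      constructor
      · rintro ⟨⟨_, h⟩, h2⟩; exact ⟨h, h2⟩
      · rintro ⟨h, h2⟩
        refine ⟨⟨fun he => ?_, h⟩, h2⟩
        exact (he ▸ hz) h2
  have hzf_insert : ∀ c, zf (insert (zf c) c) = zf c := by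
    intro c; rw [hzf]; simp only; rw [(hfilt c).1]
  have hzf_erase : ∀ c, zf (c.erase (zf c)) = zf c := by
    intro c; rw [hzf]; simp only; rw [(hfilt c).2]
  refine Finset.sum_involution
    (fun c _ => if zf c ∈ c then c.erase (zf c) else insert (zf c) c) ?_ ?_ ?_ ?_
  · -- sums to zero
    intro c _
    by_cases h : zf c ∈ c
    · simp only [h, if_true]
      rw [Finset.card_erase_of_mem h]
      have hc1 : 1 ≤ c.card := Finset.card_pos.2 ⟨_, h⟩
      obtain ⟨n, hn⟩ := Nat.exists_eq_add_of_le hc1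
      rw [hn]
      have h1n : 1 + n - 1 = n := by omega
      rw [h1n, pow_add]
      ring
    · simp only [h, if_false]
      rw [Finset.card_insert_of_notMem h, pow_succ]
      ring
  · -- g c ≠ c
    intro c _ _
    by_cases h : zf c ∈ c
    · simp only [h, if_true]
      intro he
      have hcard := Finset.card_erase_of_mem h
      rw [he] at hcard
      have hc1 : 0 < c.card := Finset.card_pos.2 ⟨_, h⟩
      omega
    · simp only [h, if_false]
      exact Finset.insert_ne_self.2 h
  · -- g c in the filtered set
    intro c hc
    rw [Finset.mem_filter] at hc
    obtain ⟨_, hcS, hch⟩ := hc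
    by_cases h : zf c ∈ c
    · simp only [h, if_true]
      rw [Finset.mem_filter]
      refine ⟨Finset.mem_univ _, ?_, ?_⟩
      · exact fun y hy => hcS (Finset.mem_coe.2 (Finset.mem_of_mem_erase (Finset.mem_coe.1 hy)))
      · exact hch.mono (by intro y hy; exact Finset.mem_coe.2 (Finset.mem_of_mem_erase (Finset.mem_coe.1 hy)))
    · simp only [h, if_false]
      rw [Finset.mem_filter]
      refine ⟨Finset.mem_univ _, ?_, ?_⟩
      · intro y hy
        rw [Finset.coe_insert] at hy
        rcases hy with rfl | hy
        · exact hzS c hcS hch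
        · exact hcS hy
      · rw [Finset.coe_insert]
        apply hch.insert
        intro y hy hyz
        rcases hcomp c hch y (Finset.mem_coe.1 hy) with h' | h'
        · exact Or.inr h'
        · exact Or.inl h'
  · -- involution
    intro c hc
    by_cases h : zf c ∈ c
    · simp only [h, if_true]
      rw [if_neg (by rw [hzf_erase c]; exact Finset.notMem_erase _ _), hzf_erase c,
        Finset.insert_erase h]
    · simp only [h, if_false]
      rw [if_pos (by rw [hzf_insert c]; exact Finset.mem_insert_self _ _), hzf_insert c,
        Finset.erase_insert h]

lemma mem_normalizer_iff_map {G : Type*} [Group G] {H : Subgroup G} {g : G} :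
    g ∈ Subgroup.normalizer (H : Set G) ↔ H.map (MulAut.conj g).toMonoidHom = H := by
  rw [Subgroup.mem_normalizer_iff]
  constructor
  · intro h
    ext x
    simp only [Subgroup.mem_map, MulEquiv.coe_toMonoidHom, MulAut.conj_apply]
    constructor
    · rintro ⟨y, hy, rfl⟩; exact (h y).1 hy
    · intro hx
      exact ⟨g⁻¹ * x * g, by
        have := (h (g⁻¹ * x * g)).2
        simp only [mul_assoc] at this ⊢
        refine this ?_
        · group
          simpa using hx, by group⟩
  · intro h x
    constructor
    · intro hx
      have : g * x * g⁻¹ ∈ H.map (MulAut.conj g).toMonoidHom :=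
        ⟨x, hx, by simp⟩
      rwa [h] at this
    · intro hx
      rw [← h] at hx
      obtain ⟨y, hy, hxy⟩ := hx
      simp only [MulEquiv.coe_toMonoidHom, MulAut.conj_apply] at hxy
      have hgyx : g * y * g⁻¹ = g * x * g⁻¹ := by
        rw [hxy]
      have : y = x := mul_left_cancel (mul_right_cancel hgyx)
      rwa [← this]

lemma mem_normalizer_sup {G : Type*} [Group G] {A B : Subgroup G} {g : G}
    (hA : g ∈ Subgroup.normalizer (A : Set G)) (hB : g ∈ Subgroup.normalizer (B : Set G)) : g ∈ Subgroup.normalizer ((A ⊔ B : Subgroup G) : Set G) := by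
  rw [mem_normalizer_iff_map] at hA hB ⊢
  rw [Subgroup.map_sup, hA, hB]

lemma mem_normalizer_frattiniIn {G : Type*} [Group G] {Q : Subgroup G} {g : G}
    (hgQ : g ∈ Subgroup.normalizer (Q : Set G)) : g ∈ Subgroup.normalizer ((frattiniIn Q : Subgroup G) : Set G) := by
  have hmemQ : ∀ x : G, x ∈ Q ↔ g * x * g⁻¹ ∈ Q := Subgroup.mem_normalizer_iff.1 hgQ
  -- conjugation by g as an automorphism of Q
  let e : ↥Q ≃* ↥Q :=
    { toFun := fun x => ⟨g * x * g⁻¹, (hmemQ x).1 x.2⟩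
      invFun := fun x => ⟨g⁻¹ * x * g, by
        have := (hmemQ (g⁻¹ * (x : G) * g)).2
        refine this ?_
        have : g * (g⁻¹ * (x : G) * g) * g⁻¹ = (x : G) := by group
        rw [this]; exact x.2⟩
      left_inv := fun x => by ext; simp; group
      right_inv := fun x => by ext; simp; group
      map_mul' := fun x y => by ext; show g * ((x : G) * y) * g⁻¹ = g * x * g⁻¹ * (g * y * g⁻¹); group }
  have hchar : (frattini ↥Q).map e.toMonoidHom = frattini ↥Q :=
    Subgroup.characteristic_iff_map_eq.1 frattini_characteristic e
  rw [mem_normalizer_iff_map]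
  have hcomm : (MulAut.conj g).toMonoidHom.comp Q.subtype
      = Q.subtype.comp e.toMonoidHom := by
    ext x; simp [e]
  calc (frattiniIn Q).map (MulAut.conj g).toMonoidHom
      = ((frattini ↥Q).map Q.subtype).map (MulAut.conj g).toMonoidHom := rfl
    _ = (frattini ↥Q).map ((MulAut.conj g).toMonoidHom.comp Q.subtype) :=
        Subgroup.map_map _ _ _
    _ = (frattini ↥Q).map (Q.subtype.comp e.toMonoidHom) := by rw [hcomm]
    _ = ((frattini ↥Q).map e.toMonoidHom).map Q.subtype := (Subgroup.map_map _ _ _).symm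
    _ = frattiniIn Q := by rw [hchar]; rfl

lemma frattiniIn_le {G : Type*} [Group G] (Q : Subgroup G) : frattiniIn Q ≤ Q :=
  Subgroup.map_subtype_le _

lemma sup_frattiniIn_lt {G : Type*} [Group G] [Finite G] {Q K : Subgroup G}
    (hK : K ≤ Q) (hne : K ≠ Q) : K ⊔ frattiniIn Q < Q := by
  have hle : K ⊔ frattiniIn Q ≤ Q := sup_le hK (frattiniIn_le Q)
  refine lt_of_le_of_ne hle ?_
  intro heq
  apply hne
  have h1 : (K ⊔ frattiniIn Q).subgroupOf Q = ⊤ := by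
    rw [heq, Subgroup.subgroupOf_self]
  rw [Subgroup.subgroupOf_sup hK (frattiniIn_le Q)] at h1
  have h2 : (frattiniIn Q).subgroupOf Q = frattini ↥Q := by
    unfold frattiniIn Subgroup.subgroupOf
    exact Subgroup.comap_map_eq_self_of_injective Q.subtype_injective _
  rw [h2] at h1
  have h3 : K.subgroupOf Q = ⊤ := frattini_nongenerating h1
  exact le_antisymm hK (Subgroup.subgroupOf_eq_top.1 h3)

theorem stmt0 {G : Type*} [Group G] [Finite G] (p : ℕ) [Fact p.Prime]
    (P Q : Subgroup G) (hP : IsPGroup p P) (hQ : IsPGroup p Q)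
    (g : G) (hgP : g ∈ Subgroup.normalizer (P : Set G)) (hgQ : g ∈ Subgroup.normalizer (Q : Set G))
    (hne : mobiusG p g P Q ≠ 0) :
    frattiniIn Q ≤ P ∧ P ≤ Q := by
  by_cases hPQ : P = Q
  · subst hPQ
    exact ⟨frattiniIn_le P, le_rfl⟩
  by_cases hlt : P < Q
  swap
  · exfalso; apply hne; unfold mobiusG; rw [if_neg hPQ, if_neg hlt]
  refine ⟨?_, hlt.le⟩
  by_contra hq
  apply hne
  unfold mobiusG
  rw [if_neg hPQ, if_pos hlt]
  unfold reducedEuler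
  rw [neg_eq_zero]
  set S : Set (Subgroup G) :=
    {R : Subgroup G | IsPGroup p R ∧ g ∈ Subgroup.normalizer (R : Set G) ∧ P < R ∧ R < Q} with hS
  set x₀ : Subgroup G := P ⊔ frattiniIn Q with hx₀def
  have hgF : g ∈ Subgroup.normalizer ((frattiniIn Q : Subgroup G) : Set G) := mem_normalizer_frattiniIn hgQ
  have hx₀Q : x₀ < Q := sup_frattiniIn_lt hlt.le hPQ
  have hx₀ : x₀ ∈ S := by
    refine ⟨hQ.to_le hx₀Q.le, mem_normalizer_sup hgP hgF, ?_, hx₀Q⟩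
    refine lt_of_le_of_ne le_sup_left ?_
    intro h
    exact hq (h ▸ le_sup_right)
  have hcl : ∀ y ∈ S, y ⊔ x₀ ∈ S := by
    rintro y ⟨hy1, hy2, hy3, hy4⟩
    have hkey : y ⊔ x₀ = y ⊔ frattiniIn Q := by
      rw [hx₀def, ← sup_assoc, sup_eq_left.2 hy3.le]
    have hlt' : y ⊔ x₀ < Q := by
      rw [hkey]
      exact sup_frattiniIn_lt hy4.le hy4.ne
    refine ⟨hQ.to_le hlt'.le, mem_normalizer_sup hy2 (mem_normalizer_sup hgP hgF), ?_, hlt'⟩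
    exact lt_of_lt_of_le hy3 le_sup_left
  exact chainSum_eq_zero_of_cone hx₀ hcl
end

section
/- Let V be a subgroup of the finite group G, let P be a p-subgroup of G with P ≤ V, and let g ∈ V with g ∈ N_G(P). Suppose K is a normal subgroup of V which is a p-group and which is not contained in P (in the paper, K = O_p(V), the largest normal p-subgroup of V). Then the reduced Euler characteristic of the poset (P,V]^⟨g⟩_{S_p} = {Q : Q a p-subgroup of G, P < Q ≤ V, g ∈ N_G(Q)} vanishes; that is, Σ_c (-1)^{|c|} = 0, the sum running over all chains c of this poset, including the empty chain. -/
open scoped Classical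

section Aux

variable {G : Type*} [Group G]

lemma map_conj_eq_iff_aux {g : G} {H : Subgroup G} :
    Subgroup.map (MulAut.conj g).toMonoidHom H = H ↔ g ∈ Subgroup.normalizer (H : Set G) := by
  rw [Subgroup.mem_normalizer_iff'', SetLike.ext_iff]
  refine forall_congr' fun x => ?_
  rw [Subgroup.mem_map_equiv, MulAut.conj_symm_apply]
  exact Iff.comm

lemma mem_normalizer_sup_aux {g : G} {A B : Subgroup G}
    (ha : g ∈ Subgroup.normalizer (A : Set G)) (hb : g ∈ Subgroup.normalizer (B : Set G)) : g ∈ Subgroup.normalizer ((A ⊔ B : Subgroup G) : Set G) := by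
  rw [← map_conj_eq_iff_aux] at ha hb ⊢
  rw [Subgroup.map_sup, ha, hb]

lemma chain_finset_sup_mem {α : Type*} [Lattice α] [OrderBot α] {t : Finset α}
    (ht : IsChain (· ≤ ·) (↑t : Set α)) (hne : t.Nonempty) : t.sup id ∈ t := by
  classical
  induction t using Finset.induction_on with
  | empty => exact absurd hne (by simp)
  | @insert a s ha ih =>
    rcases s.eq_empty_or_nonempty with rfl | hs
    · simp
    · have hts : IsChain (· ≤ ·) (↑s : Set α) :=
        ht.mono (by simp [Set.subset_insert])
      have hb : s.sup id ∈ s := ih hts hs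
      rw [Finset.sup_insert]
      by_cases hae : a = s.sup id
      · simp [← hae, Finset.mem_insert]
      · have hcomp := ht (Finset.mem_coe.2 (Finset.mem_insert_self a s))
          (Finset.mem_coe.2 (Finset.mem_insert_of_mem hb)) hae
        rcases hcomp with h | h
        · rw [show (id a : α) ⊔ s.sup id = s.sup id from sup_eq_right.2 h]
          exact Finset.mem_insert_of_mem hb
        · rw [show (id a : α) ⊔ s.sup id = a from sup_eq_left.2 h]
          exact Finset.mem_insert_self a s

variable {α : Type*} [DecidableEq α]

/-- Toggle membership of `x` in `c`. -/
def toggleF (x : α) (c : Finset α) : Finset α :=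
  if x ∈ c then c.erase x else insert x c

lemma toggleF_toggleF (x : α) (c : Finset α) : toggleF x (toggleF x c) = c := by
  unfold toggleF
  by_cases h : x ∈ c
  · rw [if_pos h, if_neg (Finset.notMem_erase x c), Finset.insert_erase h]
  · rw [if_neg h, if_pos (Finset.mem_insert_self x c), Finset.erase_insert h]

lemma toggleF_sign (x : α) (c : Finset α) :
    (-1 : ℤ) ^ c.card + (-1 : ℤ) ^ (toggleF x c).card = 0 := by
  unfold toggleF
  by_cases h : x ∈ c
  · rw [if_pos h, ← Finset.card_erase_add_one h, pow_succ]; ring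
  · rw [if_neg h, Finset.card_insert_of_notMem h, pow_succ]; ring

lemma toggleF_ne (x : α) (c : Finset α) : toggleF x c ≠ c := by
  intro h
  have h2 := toggleF_sign x c
  rw [h] at h2
  have h3 : ((-1 : ℤ)) ^ c.card ≠ 0 := pow_ne_zero _ (by norm_num)
  omega

lemma toggleF_filter (p : α → Prop) [DecidablePred p] {x : α} (hx : ¬ p x) (c : Finset α) :
    (toggleF x c).filter p = c.filter p := by
  unfold toggleF
  by_cases h : x ∈ c
  · rw [if_pos h, Finset.filter_erase,
      Finset.erase_eq_of_notMem (by simp [Finset.mem_filter, hx])]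
  · rw [if_neg h, Finset.filter_insert, if_neg hx]

lemma toggleF_coe_subset (x : α) (c : Finset α) :
    (↑(toggleF x c) : Set α) ⊆ insert x ↑c := by
  unfold toggleF
  by_cases h : x ∈ c
  · rw [if_pos h]
    exact (Finset.coe_subset.2 (Finset.erase_subset x c)).trans (Set.subset_insert _ _)
  · rw [if_neg h, Finset.coe_insert]

lemma toggleF_chain {x : α} {c : Finset α} [PartialOrder α]
    (hc : IsChain (· ≤ ·) (↑c : Set α)) (hx : ∀ z ∈ c, z ≤ x ∨ x ≤ z) :
    IsChain (· ≤ ·) (↑(toggleF x c) : Set α) := by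
  have : IsChain (· ≤ ·) (insert x (↑c : Set α)) := by
    refine hc.insert fun b hb _ => ?_
    rcases hx b (Finset.mem_coe.1 hb) with h | h
    · exact Or.inr h
    · exact Or.inl h
  exact this.mono (toggleF_coe_subset x c)

end Aux

theorem stmt1 {G : Type*} [Group G] [Finite G] (p : ℕ) [Fact p.Prime]
    (V P K : Subgroup G) (hP : IsPGroup p P) (hPV : P ≤ V)
    (g : G) (hgV : g ∈ V) (hgP : g ∈ Subgroup.normalizer (P : Set G))
    (hKV : K ≤ V) (hKnormal : ∀ v ∈ V, ∀ k ∈ K, v * k * v⁻¹ ∈ K)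
    (hK : IsPGroup p K) (hKP : ¬ K ≤ P) :
    reducedEuler {Q : Subgroup G | IsPGroup p Q ∧ P < Q ∧ Q ≤ V ∧ g ∈ Subgroup.normalizer (Q : Set G)} = 0 := by
  classical
  set S : Set (Subgroup G) :=
    {Q : Subgroup G | IsPGroup p Q ∧ P < Q ∧ Q ≤ V ∧ g ∈ Subgroup.normalizer (Q : Set G)} with hSdef
  have hVK : V ≤ Subgroup.normalizer (K : Set G) := by
    intro v hv
    rw [Subgroup.mem_normalizer_iff]
    intro k
    constructor
    · exact fun hk => hKnormal v hv k hk
    · intro hk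
      have h2 := hKnormal v⁻¹ (inv_mem hv) _ hk
      simpa [mul_assoc] using h2
  have hgK : g ∈ Subgroup.normalizer (K : Set G) := hVK hgV
  -- Q ⊔ K ∈ S for Q ∈ S
  have hsupS : ∀ Q ∈ S, Q ⊔ K ∈ S := by
    rintro Q ⟨hQp, hPQ, hQV, hgQ⟩
    exact ⟨hQp.to_sup_of_normal_right' hK (hQV.trans hVK),
      lt_of_lt_of_le hPQ le_sup_left, sup_le hQV hKV, mem_normalizer_sup_aux hgQ hgK⟩
  have hMS : P ⊔ K ∈ S :=
    ⟨hP.to_sup_of_normal_right' hK (hPV.trans hVK),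
      lt_of_le_of_ne le_sup_left (fun h => hKP (le_sup_right.trans h.ge)),
      sup_le hPV hKV, mem_normalizer_sup_aux hgP hgK⟩
  -- the "non-fixed" part of a chain and the toggled element
  set nf : Finset (Subgroup G) → Finset (Subgroup G) :=
    fun c => c.filter (fun Q => ¬ K ≤ Q) with hnf
  set pick : Finset (Subgroup G) → Subgroup G :=
    fun c => if (nf c).Nonempty then ((nf c).sup id) ⊔ K else P ⊔ K with hpick
  have hKpick : ∀ c, K ≤ pick c := by
    intro c
    rw [hpick]
    by_cases h : (nf c).Nonempty
    · simp only [if_pos h]; exact le_sup_right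
    · simp only [if_neg h]; exact le_sup_right
  have hnf_toggle : ∀ c, nf (toggleF (pick c) c) = nf c := by
    intro c
    exact toggleF_filter _ (by simpa using hKpick c) c
  have hpick_congr : ∀ c₁ c₂, nf c₁ = nf c₂ → pick c₁ = pick c₂ := by
    intro c₁ c₂ h
    rw [hpick]
    simp only [h]
  -- pick c ∈ S and pick c is comparable with every element of a chain c ⊆ S
  have hpickS : ∀ c : Finset (Subgroup G), (↑c : Set (Subgroup G)) ⊆ S →
      IsChain (· ≤ ·) (↑c : Set (Subgroup G)) →
      pick c ∈ S ∧ ∀ z ∈ c, z ≤ pick c ∨ pick c ≤ z := by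
    intro c hcS hchain
    rw [hpick]
    by_cases h : (nf c).Nonempty
    · simp only [if_pos h]
      have hnfsub : nf c ⊆ c := Finset.filter_subset _ _
      have hnfchain : IsChain (· ≤ ·) (↑(nf c) : Set (Subgroup G)) :=
        hchain.mono (Finset.coe_subset.2 hnfsub)
      have hxmem : (nf c).sup id ∈ nf c := chain_finset_sup_mem hnfchain h
      set x := (nf c).sup id with hx
      have hxc : x ∈ c := hnfsub hxmem
      have hxS : x ∈ S := hcS (Finset.mem_coe.2 hxc)
      refine ⟨hsupS x hxS, ?_⟩
      intro z hz
      by_cases hKz : K ≤ z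
      · -- z is comparable with x in the chain
        by_cases hzx : z = x
        · exact Or.inl (hzx ▸ le_sup_left)
        · rcases hchain (Finset.mem_coe.2 hz) (Finset.mem_coe.2 hxc) hzx with h1 | h1
          · exact Or.inl (h1.trans le_sup_left)
          · exact Or.inr (sup_le h1 hKz)
      · -- z ∈ nf c, so z ≤ x
        have hznf : z ∈ nf c := Finset.mem_filter.2 ⟨hz, hKz⟩
        exact Or.inl ((Finset.le_sup (f := id) hznf).trans le_sup_left)
    · simp only [if_neg h]
      refine ⟨hMS, ?_⟩
      intro z hz
      have hKz : K ≤ z := by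
        by_contra hKz
        exact h ⟨z, Finset.mem_filter.2 ⟨hz, hKz⟩⟩
      have hzS : z ∈ S := hcS (Finset.mem_coe.2 hz)
      exact Or.inr (sup_le hzS.2.1.le hKz)
  -- now the involution argument
  unfold reducedEuler chainSum
  rw [neg_eq_zero]
  refine Finset.sum_involution (fun c _ => toggleF (pick c) c) ?_ ?_ ?_ ?_
  · intro c _
    exact toggleF_sign (pick c) c
  · intro c _ _
    exact toggleF_ne (pick c) c
  · intro c hc
    rw [Finset.mem_filter] at hc ⊢
    obtain ⟨_, hcS, hchain⟩ := hc
    obtain ⟨hpS, hpcomp⟩ := hpickS c hcS hchain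
    refine ⟨Finset.mem_univ _, ?_, toggleF_chain hchain hpcomp⟩
    intro y hy
    rcases toggleF_coe_subset (pick c) c hy with rfl | hy'
    · exact hpS
    · exact hcS hy'
  · intro c hc
    have h1 : pick (toggleF (pick c) c) = pick c :=
      hpick_congr _ _ (hnf_toggle c)
    show toggleF (pick (toggleF (pick c) c)) (toggleF (pick c) c) = c
    rw [h1, toggleF_toggleF]
end
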